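/- Let H be a real Hilbert space and D ⊆ H a nonempty closed convex set. If T : H → H is quasinonexpansive on D, then Fix T ∩ D is closed and convex. -/

import Mathlib

open Filter Topology TopologicalSpace Function

variable {H : Type*} [NormedAddCommGroup H] [InnerProductSpace ℝ H]

def WeakConverge (x : ℕ → H) (p : H) : Prop :=
  Tendsto ((toWeakSpace ℝ H) ∘ x) atTop (nhds ((toWeakSpace ℝ H) p))

def FixSet (T : H → H) : Set H := {x | Function.IsFixedPt T x}

def QuasiNonexpansiveOn (T : H → H) (s : Set H) : Prop :=
  ∀ ⦃x⦄, x ∈ s → ∀ ⦃y⦄, y ∈ FixSet T ∩ s → ‖T x - y‖ ≤ ‖x - y‖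

def NonexpansiveOn (T : H → H) (s : Set H) : Prop := LipschitzOnWith 1 T s

private lemma key_iff (a b y : H) :
    ‖a - y‖ ≤ ‖b - y‖ ↔ 2 * inner ℝ (b - a) y ≤ ‖b‖ ^ 2 - ‖a‖ ^ 2 := by
  rw [← pow_le_pow_iff_left₀ (norm_nonneg _) (norm_nonneg _) (two_ne_zero),
    norm_sub_sq_real, norm_sub_sq_real, inner_sub_left]
  constructor <;> intro h <;> nlinarith

theorem quasinonexpansive_fixedPoint_closed_convex {C D : Set H}
    (hD_closed : IsClosed D) (hD_convex : Convex ℝ D) (hD_nonempty : D.Nonempty)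
    {T : H → H} (hT : QuasiNonexpansiveOn T D) (hC : C = FixSet T ∩ D) :
    IsClosed C ∧ Convex ℝ C := by
  have hCeq : C = D ∩ ⋂ x ∈ D, {y : H | 2 * inner ℝ (x - T x) y ≤ ‖x‖ ^ 2 - ‖T x‖ ^ 2} := by
    ext y
    simp only [hC, Set.mem_inter_iff, Set.mem_iInter, Set.mem_setOf_eq]
    constructor
    · rintro ⟨hyf, hyD⟩
      exact ⟨hyD, fun x hx => (key_iff (T x) x y).mp (hT hx ⟨hyf, hyD⟩)⟩
    · rintro ⟨hyD, h⟩
      refine ⟨?_, hyD⟩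
      have := (key_iff (T y) y y).mpr (h y hyD)
      have h0 : ‖T y - y‖ ≤ 0 := by simpa using this
      have : T y - y = 0 := by
        have := norm_eq_zero.mp (le_antisymm h0 (norm_nonneg _))
        exact this
      simpa [FixSet, Function.IsFixedPt, sub_eq_zero] using this
  rw [hCeq]
  constructor
  · exact hD_closed.inter (isClosed_biInter fun x _ =>
      isClosed_le (continuous_const.mul (continuous_const.inner continuous_id)) continuous_const)
  · exact hD_convex.inter (convex_iInter₂ fun x _ =>
      convex_halfSpace_le ⟨fun a b => by simp [inner_add_right]; ring,
        fun c a => by simp [inner_smul_right]; ring⟩ _)
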